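/- Assume λ_k < α ≤ β. Then for every v ∈ V₂ the function u ↦ J_{α,β}(u+v) is strictly concave on V₁ and anticoercive on V₁: J_{α,β}(u+v) → −∞ as ‖u‖ → ∞ with u ∈ V₁. -/

import Mathlib

open MeasureTheory RealInnerProductSpace Filter Topology

section helpers
variable {δ : Type*} [MeasurableSpace δ] {μ : Measure δ}

lemma posneg_sq (f : Lp ℝ 2 μ) :
    ‖Lp.posPart f‖ ^ 2 + ‖Lp.negPart f‖ ^ 2 = ‖f‖ ^ 2 := by
  have hp : ⟪Lp.posPart f, Lp.posPart f⟫ = ∫ a, Lp.posPart f a * Lp.posPart f a ∂μ := by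
    rw [L2.inner_def]; simp [RCLike.inner_apply]; simp only [pow_two]
  have hn : ⟪Lp.negPart f, Lp.negPart f⟫ = ∫ a, Lp.negPart f a * Lp.negPart f a ∂μ := by
    rw [L2.inner_def]; simp [RCLike.inner_apply]; simp only [pow_two]
  have hf : ⟪f, f⟫ = ∫ a, f a * f a ∂μ := by
    rw [L2.inner_def]; simp [RCLike.inner_apply]; simp only [pow_two]
  have hip : Integrable (fun a => Lp.posPart f a * Lp.posPart f a) μ := by
    have := L2.integrable_inner (𝕜 := ℝ) (Lp.posPart f) (Lp.posPart f)
    simp [RCLike.inner_apply] at this; simpa only [pow_two] using this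
  have hin : Integrable (fun a => Lp.negPart f a * Lp.negPart f a) μ := by
    have := L2.integrable_inner (𝕜 := ℝ) (Lp.negPart f) (Lp.negPart f)
    simp [RCLike.inner_apply] at this; simpa only [pow_two] using this
  have hsum : (∫ a, Lp.posPart f a * Lp.posPart f a ∂μ)
      + (∫ a, Lp.negPart f a * Lp.negPart f a ∂μ) = ∫ a, f a * f a ∂μ := by
    rw [← integral_add hip hin]
    refine integral_congr_ae ?_
    filter_upwards [Lp.coeFn_posPart f, Lp.coeFn_negPart_eq_max f] with a h1 h2
    rw [h1, h2]
    rcases le_total (f a) 0 with h | h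
    · rw [max_eq_right h, max_eq_left (by linarith)]; ring
    · rw [max_eq_left h, max_eq_right (by linarith)]; ring
  rw [real_inner_self_eq_norm_sq] at hp hn hf
  linarith

lemma negpart_combo (f g : Lp ℝ 2 μ) {a b : ℝ} (ha : 0 ≤ a) (hb : 0 ≤ b) :
    ‖Lp.negPart (a • f + b • g)‖ ≤ a * ‖Lp.negPart f‖ + b * ‖Lp.negPart g‖ := by
  have step : ‖Lp.negPart (a • f + b • g)‖ ≤ ‖a • Lp.negPart f + b • Lp.negPart g‖ := by
    rw [Lp.norm_def, Lp.norm_def]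
    refine ENNReal.toReal_mono (Lp.eLpNorm_ne_top _) (eLpNorm_mono_ae ?_)
    filter_upwards [Lp.coeFn_negPart_eq_max (a • f + b • g), Lp.coeFn_negPart_eq_max f,
      Lp.coeFn_negPart_eq_max g, Lp.coeFn_add (a • f) (b • g), Lp.coeFn_smul a f,
      Lp.coeFn_smul b g, Lp.coeFn_add (a • Lp.negPart f) (b • Lp.negPart g),
      Lp.coeFn_smul a (Lp.negPart f), Lp.coeFn_smul b (Lp.negPart g)]
      with x h1 h2 h3 h4 h5 h6 h7 h8 h9
    rw [Real.norm_eq_abs, Real.norm_eq_abs, h1, h4, h7]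
    simp only [Pi.add_apply]
    rw [h5, h6, h8, h9]
    simp only [Pi.smul_apply, smul_eq_mul]
    rw [h2, h3]
    have h10 : (0:ℝ) ≤ a * max (-f x) 0 + b * max (-g x) 0 := by positivity
    rw [abs_of_nonneg (le_max_right _ _), abs_of_nonneg h10]
    rcases le_total (-(a * f x + b * g x)) 0 with h | h
    · rw [max_eq_right h]; exact h10
    · rw [max_eq_left h]
      nlinarith [mul_le_mul_of_nonneg_left (le_max_left (-f x) 0) ha,
        mul_le_mul_of_nonneg_left (le_max_left (-g x) 0) hb]
  calc ‖Lp.negPart (a • f + b • g)‖ ≤ ‖a • Lp.negPart f + b • Lp.negPart g‖ := step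
    _ ≤ ‖a • Lp.negPart f‖ + ‖b • Lp.negPart g‖ := norm_add_le _ _
    _ = a * ‖Lp.negPart f‖ + b * ‖Lp.negPart g‖ := by
        rw [norm_smul, norm_smul, Real.norm_eq_abs, Real.norm_eq_abs,
          abs_of_nonneg ha, abs_of_nonneg hb]

lemma combo_norm_sq {E : Type*} [NormedAddCommGroup E] [InnerProductSpace ℝ E]
    (a b : ℝ) (hab : a + b = 1) (x y : E) :
    ‖a • x + b • y‖ ^ 2 = a * ‖x‖ ^ 2 + b * ‖y‖ ^ 2 - a * b * ‖x - y‖ ^ 2 := by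
  have h1 := norm_add_sq_real (a • x) (b • y)
  have h2 := norm_sub_sq_real x y
  rw [norm_smul, norm_smul, real_inner_smul_left, real_inner_smul_right,
    Real.norm_eq_abs, Real.norm_eq_abs, mul_pow, mul_pow, sq_abs, sq_abs] at h1
  rw [h1, h2]
  linear_combination (a * ‖x‖ ^ 2 + b * ‖y‖ ^ 2) * hab

end helpers

noncomputable def Jfun {Ω : Type*} [MeasurableSpace Ω] {μ : Measure Ω}
    {X₀ : Type*} [NormedAddCommGroup X₀] [InnerProductSpace ℝ X₀]
    (T : X₀ →ₗ[ℝ] Lp ℝ 2 μ) (α β : ℝ) (u : X₀) : ℝ :=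
  (⟪u, u⟫ - α * ‖Lp.posPart (T u)‖ ^ 2 - β * ‖Lp.negPart (T u)‖ ^ 2) / 2

set_option maxHeartbeats 1000000 in
theorem stmt_1
    {n : ℕ} {s : ℝ} (hs0 : 0 < s) (hs1 : s < 1) (hns : 2 * s < (n : ℝ))
    {Ωs : Set (EuclideanSpace ℝ (Fin n))} (hΩb : Bornology.IsBounded Ωs)
    (hΩm : MeasurableSet Ωs)
    {K : EuclideanSpace ℝ (Fin n) → ℝ} (hKpos : ∀ x, x ≠ 0 → 0 < K x)
    (hK1 : Integrable (fun x => min (‖x‖ ^ 2) 1 * K x))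
    (hK2 : ∃ lam > 0, ∀ x, x ≠ 0 → lam * ‖x‖ ^ (-((n : ℝ) + 2 * s)) ≤ K x)
    (hK3 : ∀ x, K (-x) = K x)
    {X₀ : Type*} [NormedAddCommGroup X₀] [InnerProductSpace ℝ X₀] [CompleteSpace X₀]
    (T : X₀ →ₗ[ℝ] Lp ℝ 2 (volume.restrict Ωs)) (hT : Function.Injective T)
    {lk lk1 : ℝ} (hlk0 : 0 < lk) (hlk : lk < lk1)
    (V₁ V₂ : Submodule ℝ X₀) [FiniteDimensional ℝ V₁]
    (hV₂ : ∀ v : X₀, v ∈ V₂ ↔ ∀ u ∈ V₁, ⟪u, v⟫ = 0 ∧ ⟪T u, T v⟫ = 0)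
    (hcompl : IsCompl V₁ V₂)
    (hV₁b : ∀ u ∈ V₁, ⟪u, u⟫ ≤ lk * ‖T u‖ ^ 2)
    (hV₂b : ∀ v ∈ V₂, lk1 * ‖T v‖ ^ 2 ≤ ⟪v, v⟫)
    {α β : ℝ} (hA : lk < α) (hAB : α ≤ β)
    :
    ∀ v : V₂,
      StrictConcaveOn ℝ (Set.univ : Set V₁)
        (fun u : V₁ => Jfun T α β ((u : X₀) + (v : X₀))) ∧
      ∀ C : ℝ, ∃ R : ℝ, ∀ u : V₁, R ≤ ‖(u : X₀)‖ →
        Jfun T α β ((u : X₀) + (v : X₀)) ≤ C := by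
  intro v
  have horth : ∀ u : V₁, ⟪(u : X₀), (v : X₀)⟫ = 0 ∧ ⟪T (u : X₀), T (v : X₀)⟫ = 0 :=
    fun u => (hV₂ (v : X₀)).mp v.2 (u : X₀) u.2
  set c : ℝ := (‖(v : X₀)‖ ^ 2 - α * ‖T (v : X₀)‖ ^ 2) / 2 with hcdef
  have key : ∀ u : V₁, Jfun T α β ((u : X₀) + (v : X₀)) =
      (‖(u : X₀)‖ ^ 2 - α * ‖T (u : X₀)‖ ^ 2) / 2 + c
        - (β - α) / 2 * ‖Lp.negPart (T (u : X₀) + T (v : X₀))‖ ^ 2 := by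
    intro u
    obtain ⟨h1, h2⟩ := horth u
    have e1 : ⟪(u : X₀) + (v : X₀), (u : X₀) + (v : X₀)⟫
        = ‖(u : X₀)‖ ^ 2 + ‖(v : X₀)‖ ^ 2 := by
      rw [real_inner_self_eq_norm_sq, norm_add_sq_real, h1]; ring
    have e2 : T ((u : X₀) + (v : X₀)) = T (u : X₀) + T (v : X₀) := map_add T _ _
    have e3 := posneg_sq (T (u : X₀) + T (v : X₀))
    have e4 : ‖T (u : X₀) + T (v : X₀)‖ ^ 2 = ‖T (u : X₀)‖ ^ 2 + ‖T (v : X₀)‖ ^ 2 := by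
      rw [norm_add_sq_real, h2]; ring
    simp only [Jfun, e2, e1]
    rw [hcdef]
    linear_combination (-α/2) * e3 + (-α/2) * e4
  constructor
  · have Fdef : (fun u : V₁ => Jfun T α β ((u : X₀) + (v : X₀))) = fun u : V₁ =>
        (‖(u : X₀)‖ ^ 2 - α * ‖T (u : X₀)‖ ^ 2) / 2 + c
          - (β - α) / 2 * ‖Lp.negPart (T (u : X₀) + T (v : X₀))‖ ^ 2 := funext key
    rw [Fdef]
    refine ⟨convex_univ, ?_⟩
    intro x _ y _ hxy a b ha hb hab
    simp only [smul_eq_mul, Submodule.coe_add, Submodule.coe_smul]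
    set X := (x : X₀) with hX
    set Y := (y : X₀) with hY
    have hZ : ‖a • X + b • Y‖ ^ 2 = a * ‖X‖ ^ 2 + b * ‖Y‖ ^ 2 - a * b * ‖X - Y‖ ^ 2 :=
      combo_norm_sq a b hab X Y
    have hTz : T (a • X + b • Y) = a • T X + b • T Y := by
      rw [map_add, LinearMap.map_smul, LinearMap.map_smul]
    have hTZ : ‖T (a • X + b • Y)‖ ^ 2
        = a * ‖T X‖ ^ 2 + b * ‖T Y‖ ^ 2 - a * b * ‖T X - T Y‖ ^ 2 := by
      rw [hTz]; exact combo_norm_sq a b hab _ _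
    have hTsub : T X - T Y = T (X - Y) := (map_sub T X Y).symm
    have hbound : ‖X - Y‖ ^ 2 ≤ lk * ‖T (X - Y)‖ ^ 2 := by
      have := hV₁b (X - Y) (sub_mem x.2 y.2)
      rwa [real_inner_self_eq_norm_sq] at this
    have hne : X - Y ≠ 0 := sub_ne_zero.mpr (fun h => hxy (Subtype.coe_injective h))
    have hXYpos : 0 < ‖X - Y‖ ^ 2 := pow_pos (norm_pos_iff.mpr hne) 2
    have hTne : T (X - Y) ≠ 0 := fun h => hne (by
      apply hT; rw [h, map_zero])
    have hTpos : 0 < ‖T (X - Y)‖ ^ 2 := pow_pos (norm_pos_iff.mpr hTne) 2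
    have h6 : a * b * (‖X - Y‖ ^ 2 - α * ‖T (X - Y)‖ ^ 2) < 0 := by
      apply mul_neg_of_pos_of_neg (mul_pos ha hb)
      have := mul_lt_mul_of_pos_right hA hTpos
      linarith
    set nx := ‖Lp.negPart (T X + T (v : X₀))‖ with hnx
    set ny := ‖Lp.negPart (T Y + T (v : X₀))‖ with hny
    have hvcomb : T (a • X + b • Y) + T (v : X₀)
        = a • (T X + T (v : X₀)) + b • (T Y + T (v : X₀)) := by
      rw [hTz, smul_add, smul_add]
      have h1v : a • T (v : X₀) + b • T (v : X₀) = T (v : X₀) := by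
        rw [← add_smul, hab, one_smul]
      rw [add_add_add_comm, h1v]
    have hnZ : ‖Lp.negPart (T (a • X + b • Y) + T (v : X₀))‖ ≤ a * nx + b * ny := by
      rw [hvcomb]; exact negpart_combo _ _ ha.le hb.le
    have hnZsq : ‖Lp.negPart (T (a • X + b • Y) + T (v : X₀))‖ ^ 2 ≤ (a * nx + b * ny) ^ 2 :=
      pow_le_pow_left₀ (norm_nonneg _) hnZ 2
    have hsq : (a * nx + b * ny) ^ 2 ≤ a * nx ^ 2 + b * ny ^ 2 := by
      nlinarith [sq_nonneg (nx - ny), mul_pos ha hb]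
    have h5 : (β - α) / 2 * ‖Lp.negPart (T (a • X + b • Y) + T (v : X₀))‖ ^ 2
        ≤ (β - α) / 2 * (a * nx ^ 2 + b * ny ^ 2) :=
      mul_le_mul_of_nonneg_left (le_trans hnZsq hsq) (by linarith)
    have hc2 : a * c + b * c = c := by rw [← add_mul, hab, one_mul]
    rw [hZ, hTZ, hTsub]
    linarith [h5, h6, hc2]
  · intro C
    have hepos : 0 < (α / lk - 1) / 2 := by
      have : 1 < α / lk := (one_lt_div hlk0).mpr hA
      linarith
    refine ⟨Real.sqrt (max 0 ((c - C) / ((α / lk - 1) / 2))), fun u hu => ?_⟩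
    have hR0 : (0:ℝ) ≤ Real.sqrt (max 0 ((c - C) / ((α / lk - 1) / 2))) := Real.sqrt_nonneg _
    have husq : max 0 ((c - C) / ((α / lk - 1) / 2)) ≤ ‖(u : X₀)‖ ^ 2 := by
      calc max 0 ((c - C) / ((α / lk - 1) / 2))
          = Real.sqrt (max 0 ((c - C) / ((α / lk - 1) / 2))) ^ 2 :=
            (Real.sq_sqrt (le_max_left _ _)).symm
        _ ≤ ‖(u : X₀)‖ ^ 2 := pow_le_pow_left₀ hR0 hu 2
    have h1 : (c - C) / ((α / lk - 1) / 2) ≤ ‖(u : X₀)‖ ^ 2 := le_trans (le_max_right _ _) husq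
    have h2 : c - C ≤ (α / lk - 1) / 2 * ‖(u : X₀)‖ ^ 2 := by
      rw [div_le_iff₀ hepos] at h1; linarith
    rw [key u]
    have hb2 : ‖(u : X₀)‖ ^ 2 ≤ lk * ‖T (u : X₀)‖ ^ 2 := by
      have := hV₁b (u : X₀) u.2
      rwa [real_inner_self_eq_norm_sq] at this
    have hmul : (α / lk) * ‖(u : X₀)‖ ^ 2 ≤ (α / lk) * (lk * ‖T (u : X₀)‖ ^ 2) :=
      mul_le_mul_of_nonneg_left hb2 (le_of_lt (div_pos (lt_trans hlk0 hA) hlk0))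
    have hfld : (α / lk) * (lk * ‖T (u : X₀)‖ ^ 2) = α * ‖T (u : X₀)‖ ^ 2 := by
      field_simp
    rw [hfld] at hmul
    have hkey2 : ‖(u : X₀)‖ ^ 2 - α * ‖T (u : X₀)‖ ^ 2 ≤ (1 - α / lk) * ‖(u : X₀)‖ ^ 2 := by
      linarith
    have hneg : 0 ≤ (β - α) / 2 * ‖Lp.negPart (T (u : X₀) + T (v : X₀))‖ ^ 2 := by
      have hba : (0:ℝ) ≤ β - α := by linarith
      positivity
    linarith
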